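/- Under the mixture setup, P(Ã) = 1/2 and, for each i = 1, …, n, X̃_i = E[1_Ã | G̃_i] almost surely; moreover each X̃_i takes at most 2m distinct values, so that (X̃_1, …, X̃_n) ∈ C(n, 2m). -/

import Mathlib

open MeasureTheory

noncomputable section

theorem mixture_coherent {Ω : Type} [mΩ : MeasurableSpace Ω] (P : Measure Ω)
    [IsProbabilityMeasure P] (n M : ℕ) (hM : 1 ≤ M)
    (A : Set Ω) (hA : MeasurableSet A)
    (G : Fin n → MeasurableSpace Ω) (hG : ∀ i, G i ≤ mΩ)
    (X : Fin n → Ω → ℝ)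
    (hX : ∀ i, X i =ᵐ[P] P[A.indicator (fun _ => (1 : ℝ)) | G i])
    (hXfin : ∀ i, ∃ s : Finset ℝ, s.card ≤ M ∧ ∀ᵐ ω ∂P, X i ω ∈ s)
    (U : Ω → ℝ) (hU : Measurable U)
    (hU0 : P {ω | U ω = 0} = 1 / 2) (hU1 : P {ω | U ω = 1} = 1 / 2)
    (hindep : ProbabilityTheory.Indep (MeasurableSpace.comap U inferInstance)
      ((⨆ i, G i) ⊔ MeasurableSpace.generateFrom {A}) P)
    (Xt : Fin n → Ω → ℝ)
    (hXt : Xt = fun i ω => U ω * X i ω + (1 - U ω) * (1 - X i ω))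
    (At : Set Ω) (hAt : At = (A ∩ {ω | U ω = 1}) ∪ (Aᶜ ∩ {ω | U ω = 0}))
    (Gt : Fin n → MeasurableSpace Ω)
    (hGt : Gt = fun i => G i ⊔ MeasurableSpace.comap U inferInstance) :
    P At = 1 / 2 ∧
      (∀ i, Xt i =ᵐ[P] P[At.indicator (fun _ => (1 : ℝ)) | Gt i]) ∧
      (∀ i, ∃ s : Finset ℝ, s.card ≤ 2 * M ∧ ∀ᵐ ω ∂P, Xt i ω ∈ s) := by
  simp only [hXt, hAt, hGt]
  set E0 : Set Ω := {ω | U ω = 0} with hE0def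
  set E1 : Set Ω := {ω | U ω = 1} with hE1def
  have hE0m : MeasurableSet E0 := hU (measurableSet_singleton 0)
  have hE1m : MeasurableSet E1 := hU (measurableSet_singleton 1)
  have hE0c : MeasurableSet[MeasurableSpace.comap U inferInstance] E0 :=
    ⟨{0}, measurableSet_singleton 0, rfl⟩
  have hE1c : MeasurableSet[MeasurableSpace.comap U inferInstance] E1 :=
    ⟨{1}, measurableSet_singleton 1, rfl⟩
  have hm2le : ((⨆ i, G i) ⊔ MeasurableSpace.generateFrom {A}) ≤ mΩ := by
    refine sup_le (iSup_le hG) (MeasurableSpace.generateFrom_le ?_)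
    rintro t ht
    rw [Set.mem_singleton_iff] at ht
    subst ht; exact hA
  have hAm2 : MeasurableSet[(⨆ i, G i) ⊔ MeasurableSpace.generateFrom {A}] A :=
    (le_sup_right : MeasurableSpace.generateFrom {A} ≤ (⨆ i, G i) ⊔ MeasurableSpace.generateFrom {A}) A
      (MeasurableSpace.measurableSet_generateFrom rfl)
  have hGim2 : ∀ i, G i ≤ (⨆ i, G i) ⊔ MeasurableSpace.generateFrom {A} := fun i => (le_iSup G i).trans le_sup_left
  have hind : ∀ s t : Set Ω, MeasurableSet[MeasurableSpace.comap U inferInstance] s →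
      MeasurableSet[(⨆ i, G i) ⊔ MeasurableSpace.generateFrom {A}] t → P (s ∩ t) = P s * P t :=
    (ProbabilityTheory.Indep_iff _ _ _).1 hindep
  -- a.e., U takes values 0 or 1
  have hU01 : ∀ᵐ ω ∂P, U ω = 0 ∨ U ω = 1 := by
    have hdisj : Disjoint E0 E1 := by
      rw [Set.disjoint_left]
      intro ω h0 h1
      exact zero_ne_one ((h0 : U ω = 0).symm.trans (h1 : U ω = 1))
    have hunion : P (E0 ∪ E1) = 1 := by
      rw [measure_union hdisj hE1m, hU0, hU1, ENNReal.add_halves]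
    have hcompl : P ((E0 ∪ E1)ᶜ) = 0 := by
      rw [prob_compl_eq_zero_iff (hE0m.union hE1m)]
      exact hunion
    rw [ae_iff]
    refine measure_mono_null ?_ hcompl
    intro ω hω
    simp only [Set.mem_setOf_eq, not_or] at hω
    simp only [Set.mem_compl_iff, Set.mem_union, hE0def, hE1def, Set.mem_setOf_eq, not_or]
    exact hω
  -- Part 1
  have hdisjA : Disjoint (A ∩ E1) (Aᶜ ∩ E0) := by
    rw [Set.disjoint_left]
    intro ω h1 h0
    exact zero_ne_one ((h0.2 : U ω = 0).symm.trans (h1.2 : U ω = 1))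
  have part1 : P ((A ∩ E1) ∪ (Aᶜ ∩ E0)) = 1 / 2 := by
    rw [measure_union hdisjA (hA.compl.inter hE0m), Set.inter_comm A, Set.inter_comm Aᶜ,
      hind E1 A hE1c hAm2, hind E0 Aᶜ hE0c hAm2.compl, hU0, hU1,
      prob_compl_eq_one_sub hA, ← mul_add, add_tsub_cancel_of_le prob_le_one, mul_one]
  have hAtm : MeasurableSet ((A ∩ E1) ∪ (Aᶜ ∩ E0)) := (hA.inter hE1m).union (hA.compl.inter hE0m)
  refine ⟨part1, ?_, ?_⟩
  · -- Part 2
    intro i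
    have hm : (G i ⊔ MeasurableSpace.comap U inferInstance) ≤ mΩ := sup_le (hG i) hU.comap_le
    have hUm : Measurable[G i ⊔ MeasurableSpace.comap U inferInstance] U := Measurable.of_comap_le le_sup_right
    set f : Ω → ℝ := P[A.indicator (fun _ => (1 : ℝ)) | G i] with hfdef
    have hf_sm : StronglyMeasurable[G i] f := stronglyMeasurable_condExp
    have hf_int : Integrable f P := integrable_condExp
    have hXf : X i =ᵐ[P] f := hX i
    have hXi_int : Integrable (X i) P := hf_int.congr hXf.symm
    have h1A_int : Integrable (A.indicator fun _ => (1 : ℝ)) P := (integrable_const 1).indicator hA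
    have hset_f : ∀ g : Set Ω, MeasurableSet[G i] g →
        ∫ x in g, f x ∂P = (P (A ∩ g)).toReal := by
      intro g hg
      rw [hfdef, setIntegral_condExp (hG i) h1A_int hg, setIntegral_indicator hA,
        setIntegral_const]
      simp [Set.inter_comm]
      rfl
    set F : Ω → ℝ := fun ω => U ω * X i ω + (1 - U ω) * (1 - X i ω) with hFdef
    set I1 : Ω → ℝ := ((A ∩ E1) ∪ (Aᶜ ∩ E0)).indicator (fun _ => (1 : ℝ)) with hI1def
    have h1At_int : Integrable I1 P := (integrable_const 1).indicator hAtm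
    have hF_int : Integrable F P := by
      have h1 : Integrable (E1.indicator (X i) + E0.indicator (fun ω => 1 - X i ω)) P :=
        (hXi_int.indicator hE1m).add (((integrable_const 1).sub hXi_int).indicator hE0m)
      refine h1.congr ?_
      filter_upwards [hU01] with ω h
      rcases h with h | h
      · simp [hFdef, Set.indicator_apply, hE0def, hE1def, Set.mem_setOf_eq, h]
      · simp [hFdef, Set.indicator_apply, hE0def, hE1def, Set.mem_setOf_eq, h]
    -- the G-measurable version of F
    set k : Ω → ℝ := fun ω => U ω * f ω + (1 - U ω) * (1 - f ω) with hkdef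
    have hUsm : StronglyMeasurable[G i ⊔ MeasurableSpace.comap U inferInstance] U := hUm.stronglyMeasurable
    have hfsm' : StronglyMeasurable[G i ⊔ MeasurableSpace.comap U inferInstance] f := hf_sm.mono le_sup_left
    have hk_sm : StronglyMeasurable[G i ⊔ MeasurableSpace.comap U inferInstance] k :=
      (hUsm.mul hfsm').add ((stronglyMeasurable_const.sub hUsm).mul
        (stronglyMeasurable_const.sub hfsm'))
    have hFk : F =ᵐ[P] k := by
      filter_upwards [hXf] with ω h
      simp only [hFdef, hkdef, h]
    -- independence: product of integrals
    have hindf : ∀ (φ ψ : Ω → ℝ), Measurable[MeasurableSpace.comap U inferInstance] φ →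
        StronglyMeasurable[(⨆ i, G i) ⊔ MeasurableSpace.generateFrom {A}] ψ →
        ∫ ω, φ ω * ψ ω ∂P = (∫ ω, φ ω ∂P) * ∫ ω, ψ ω ∂P := by
      intro φ ψ hφ hψ
      have h : ProbabilityTheory.IndepFun φ ψ P := by
        rw [ProbabilityTheory.IndepFun_iff_Indep]
        rw [ProbabilityTheory.Indep_iff] at hindep ⊢
        intro t1 t2 h1 h2
        exact hindep t1 t2 (hφ.comap_le t1 h1) ((hψ.measurable.comap_le) t2 h2)
      exact ProbabilityTheory.IndepFun.integral_mul_eq_mul_integral h ((hφ.mono hU.comap_le le_rfl).aestronglyMeasurable)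
        ((hψ.mono hm2le).aestronglyMeasurable)
    have hRHS : ∀ S : Set Ω, MeasurableSet S →
        ∫ ω in S, I1 ω ∂P = (P (((A ∩ E1) ∪ (Aᶜ ∩ E0)) ∩ S)).toReal := by
      intro S hS
      rw [hI1def, setIntegral_indicator hAtm, setIntegral_const]
      simp [Set.inter_comm]
      rfl
    -- base case on E1
    have hbase1 : ∀ g : Set Ω, MeasurableSet[G i] g →
        ∫ ω in g ∩ E1, F ω ∂P = ∫ ω in g ∩ E1, I1 ω ∂P := by
      intro g hg
      have hgm : MeasurableSet g := hG i g hg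
      have hL : ∫ ω in g ∩ E1, F ω ∂P = (P E1).toReal * (P (A ∩ g)).toReal := by
        have e1 : ∫ ω in g ∩ E1, F ω ∂P = ∫ ω in g ∩ E1, f ω ∂P := by
          refine setIntegral_congr_ae (hgm.inter hE1m) ?_
          filter_upwards [hXf] with ω hω hmem
          have hu : U ω = 1 := hmem.2
          simp only [hFdef, hu, hω]; ring
        have e2 : ∫ ω in g ∩ E1, f ω ∂P
            = ∫ ω, (E1.indicator (fun _ => (1 : ℝ)) ω) * (g.indicator f ω) ∂P := by
          rw [← integral_indicator (hgm.inter hE1m)]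
          congr 1
          ext ω
          by_cases h1 : ω ∈ g <;> by_cases h2 : ω ∈ E1 <;>
            simp [Set.indicator_apply, h1, h2]
        rw [e1, e2, hindf _ _ (measurable_const.indicator hE1c)
          ((hf_sm.mono (hGim2 i)).indicator (hGim2 i g hg)),
          integral_indicator_const _ hE1m, integral_indicator hgm, hset_f g hg]
        simp
        exact Or.inl rfl
      have hR : ∫ ω in g ∩ E1, I1 ω ∂P = (P E1).toReal * (P (A ∩ g)).toReal := by
        rw [hRHS _ (hgm.inter hE1m)]
        have hseteq : ((A ∩ E1) ∪ (Aᶜ ∩ E0)) ∩ (g ∩ E1) = E1 ∩ (A ∩ g) := by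
          ext ω
          simp only [Set.mem_inter_iff, Set.mem_union, Set.mem_compl_iff, hE0def, hE1def,
            Set.mem_setOf_eq]
          constructor
          · rintro ⟨h1 | h1, h2, h3⟩
            · exact ⟨h3, h1.1, h2⟩
            · exact absurd (h1.2.symm.trans h3) zero_ne_one
          · rintro ⟨h1, h2, h3⟩
            exact ⟨Or.inl ⟨h2, h1⟩, h3, h1⟩
        rw [hseteq, hind E1 (A ∩ g) hE1c (hAm2.inter (hGim2 i g hg)), ENNReal.toReal_mul]
      rw [hL, hR]
    -- base case on E0
    have hbase0 : ∀ g : Set Ω, MeasurableSet[G i] g →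
        ∫ ω in g ∩ E0, F ω ∂P = ∫ ω in g ∩ E0, I1 ω ∂P := by
      intro g hg
      have hgm : MeasurableSet g := hG i g hg
      have hgsplit : P (A ∩ g) + P (Aᶜ ∩ g) = P g := by
        rw [Set.inter_comm A, Set.inter_comm Aᶜ, ← measure_union
          (by rw [Set.disjoint_left]; intro ω h1 h2; exact h2.2 h1.2) (hgm.inter hA.compl),
          Set.inter_union_compl]
      have hgsplit' : (P (Aᶜ ∩ g)).toReal = (P g).toReal - (P (A ∩ g)).toReal := by
        have := congrArg ENNReal.toReal hgsplit
        rw [ENNReal.toReal_add (measure_ne_top _ _) (measure_ne_top _ _)] at this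
        linarith
      have hL : ∫ ω in g ∩ E0, F ω ∂P
          = (P E0).toReal * ((P g).toReal - (P (A ∩ g)).toReal) := by
        have e1 : ∫ ω in g ∩ E0, F ω ∂P = ∫ ω in g ∩ E0, (1 - f ω) ∂P := by
          refine setIntegral_congr_ae (hgm.inter hE0m) ?_
          filter_upwards [hXf] with ω hω hmem
          have hu : U ω = 0 := hmem.2
          simp only [hFdef, hu, hω]; ring
        have e2 : ∫ ω in g ∩ E0, (1 - f ω) ∂P
            = ∫ ω, (E0.indicator (fun _ => (1 : ℝ)) ω) * (g.indicator (fun x => 1 - f x) ω) ∂P := by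
          rw [← integral_indicator (hgm.inter hE0m)]
          congr 1
          ext ω
          by_cases h1 : ω ∈ g <;> by_cases h2 : ω ∈ E0 <;>
            simp [Set.indicator_apply, h1, h2]
        have hψ0 : StronglyMeasurable[(⨆ i, G i) ⊔ MeasurableSpace.generateFrom {A}]
            (g.indicator fun x => 1 - f x) :=
          StronglyMeasurable.indicator
            (by exact stronglyMeasurable_const.sub (hf_sm.mono (hGim2 i))) (hGim2 i g hg)
        rw [e1, e2, hindf _ _ (measurable_const.indicator hE0c) hψ0,
          integral_indicator_const _ hE0m, integral_indicator hgm]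
        have e3 : ∫ ω in g, (1 - f ω) ∂P = (P g).toReal - (P (A ∩ g)).toReal := by
          rw [integral_sub (integrableOn_const (C := (1:ℝ)) (measure_ne_top _ _))
            hf_int.integrableOn, hset_f g hg, setIntegral_const]
          simp
          rfl
        rw [e3]
        simp
        exact Or.inl rfl
      have hR : ∫ ω in g ∩ E0, I1 ω ∂P
          = (P E0).toReal * ((P g).toReal - (P (A ∩ g)).toReal) := by
        rw [hRHS _ (hgm.inter hE0m)]
        have hseteq : ((A ∩ E1) ∪ (Aᶜ ∩ E0)) ∩ (g ∩ E0) = E0 ∩ (Aᶜ ∩ g) := by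
          ext ω
          simp only [Set.mem_inter_iff, Set.mem_union, Set.mem_compl_iff, hE0def, hE1def,
            Set.mem_setOf_eq]
          constructor
          · rintro ⟨h1 | h1, h2, h3⟩
            · exact absurd (h3.symm.trans h1.2) zero_ne_one
            · exact ⟨h3, h1.1, h2⟩
          · rintro ⟨h1, h2, h3⟩
            exact ⟨Or.inr ⟨h2, h1⟩, h3, h1⟩
        rw [hseteq, hind E0 (Aᶜ ∩ g) hE0c (hAm2.compl.inter (hGim2 i g hg)),
          ENNReal.toReal_mul, hgsplit']
      rw [hL, hR]
    -- base case: all π-system sets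
    have hbase01 : ∀ g : Set Ω, MeasurableSet[G i] g → ∀ B : Set ℝ, MeasurableSet B →
        ∫ ω in g ∩ U ⁻¹' B, F ω ∂P = ∫ ω in g ∩ U ⁻¹' B, I1 ω ∂P := by
      intro g hg B hB
      have hgm : MeasurableSet g := hG i g hg
      have key : ∀ T : Set Ω, (∀ ω, (U ω = 0 ∨ U ω = 1) → (ω ∈ U ⁻¹' B ↔ ω ∈ T)) →
          (g ∩ U ⁻¹' B : Set Ω) =ᵐ[P] (g ∩ T : Set Ω) := by
        intro T hT
        filter_upwards [hU01] with ω h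
        exact propext (and_congr_right fun _ => hT ω h)
      by_cases h0 : (0 : ℝ) ∈ B <;> by_cases h1 : (1 : ℝ) ∈ B
      · have hae : (g ∩ U ⁻¹' B : Set Ω) =ᵐ[P] (g ∩ (E0 ∪ E1) : Set Ω) := by
          refine key _ ?_
          intro ω h
          rcases h with h | h <;>
            simp [Set.mem_preimage, hE0def, hE1def, Set.mem_setOf_eq, h, h0, h1]
        rw [setIntegral_congr_set hae, setIntegral_congr_set hae,
          Set.inter_union_distrib_left]
        have hd : Disjoint (g ∩ E0) (g ∩ E1) := by
          rw [Set.disjoint_left]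
          intro ω ha hb
          exact zero_ne_one ((ha.2 : U ω = 0).symm.trans (hb.2 : U ω = 1))
        rw [setIntegral_union hd (hgm.inter hE1m) hF_int.integrableOn hF_int.integrableOn,
          setIntegral_union hd (hgm.inter hE1m) h1At_int.integrableOn h1At_int.integrableOn,
          hbase0 g hg, hbase1 g hg]
      · have hae : (g ∩ U ⁻¹' B : Set Ω) =ᵐ[P] (g ∩ E0 : Set Ω) := by
          refine key _ ?_
          intro ω h
          rcases h with h | h <;>
            simp [Set.mem_preimage, hE0def, hE1def, Set.mem_setOf_eq, h, h0, h1]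
        rw [setIntegral_congr_set hae, setIntegral_congr_set hae, hbase0 g hg]
      · have hae : (g ∩ U ⁻¹' B : Set Ω) =ᵐ[P] (g ∩ E1 : Set Ω) := by
          refine key _ ?_
          intro ω h
          rcases h with h | h <;>
            simp [Set.mem_preimage, hE0def, hE1def, Set.mem_setOf_eq, h, h0, h1]
        rw [setIntegral_congr_set hae, setIntegral_congr_set hae, hbase1 g hg]
      · have hae : (g ∩ U ⁻¹' B : Set Ω) =ᵐ[P] (∅ : Set Ω) := by
          have : (g ∩ U ⁻¹' B : Set Ω) =ᵐ[P] (g ∩ ∅ : Set Ω) := by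
            refine key _ ?_
            intro ω h
            rcases h with h | h <;>
              simp [Set.mem_preimage, hE0def, hE1def, Set.mem_setOf_eq, h, h0, h1]
          simpa using this
        rw [setIntegral_congr_set hae, setIntegral_congr_set hae]
        simp [Measure.restrict_empty]
    -- the generating π-system
    set piSys : Set (Set Ω) :=
      {S : Set Ω | ∃ g : Set Ω, MeasurableSet[G i] g ∧
        ∃ B : Set ℝ, MeasurableSet B ∧ S = g ∩ U ⁻¹' B} with hpidef
    have hpi : IsPiSystem piSys := by
      rintro S1 ⟨g1, hg1, B1, hB1, rfl⟩ S2 ⟨g2, hg2, B2, hB2, rfl⟩ -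
      exact ⟨g1 ∩ g2, hg1.inter hg2, B1 ∩ B2, hB1.inter hB2, by
        rw [Set.preimage_inter, Set.inter_inter_inter_comm]⟩
    have hgen : (G i ⊔ MeasurableSpace.comap U inferInstance) = MeasurableSpace.generateFrom piSys := by
      refine le_antisymm (sup_le ?_ ?_) (MeasurableSpace.generateFrom_le ?_)
      · intro g hg
        exact MeasurableSpace.measurableSet_generateFrom
          ⟨g, hg, Set.univ, MeasurableSet.univ, by simp⟩
      · rintro s ⟨B, hB, rfl⟩
        exact MeasurableSpace.measurableSet_generateFrom
          ⟨Set.univ, @MeasurableSet.univ Ω (G i), B, hB, by simp⟩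
      · rintro S ⟨g, hg, B, hB, rfl⟩
        exact ((le_sup_left : G i ≤ G i ⊔ MeasurableSpace.comap U inferInstance) g hg).inter
          ((le_sup_right : MeasurableSpace.comap U inferInstance ≤ G i ⊔ MeasurableSpace.comap U inferInstance) _ ⟨B, hB, rfl⟩)
    have htot : ∫ ω, F ω ∂P = ∫ ω, I1 ω ∂P := by
      have := hbase01 Set.univ (@MeasurableSet.univ Ω (G i)) Set.univ MeasurableSet.univ
      simpa [Measure.restrict_univ] using this
    have hC : ∀ S : Set Ω, MeasurableSet[G i ⊔ MeasurableSpace.comap U inferInstance] S →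
        ∫ ω in S, F ω ∂P = ∫ ω in S, I1 ω ∂P := by
      intro S hS
      refine MeasurableSpace.induction_on_inter
        (C := fun S _ => ∫ ω in S, F ω ∂P = ∫ ω in S, I1 ω ∂P) hgen hpi ?_ ?_ ?_ ?_ S hS
      · simp
      · rintro t ⟨g, hg, B, hB, rfl⟩
        exact hbase01 g hg B hB
      · intro t ht hCt
        have htm : MeasurableSet t := hm t ht
        have h1 := integral_add_compl htm hF_int
        have h2 := integral_add_compl htm h1At_int
        linarith
      · intro seq hdisj hmeasx hCx
        rw [integral_iUnion (fun j => hm _ (hmeasx j)) hdisj hF_int.integrableOn,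
          integral_iUnion (fun j => hm _ (hmeasx j)) hdisj h1At_int.integrableOn]
        exact tsum_congr hCx
    exact ae_eq_condExp_of_forall_setIntegral_eq hm h1At_int
      (fun s _ _ => hF_int.integrableOn) (fun s hs _ => hC s hs) ⟨k, hk_sm, hFk⟩
  · -- Part 3
    intro i
    obtain ⟨s, hcard, hmem⟩ := hXfin i
    refine ⟨s ∪ s.image (fun x => 1 - x), ?_, ?_⟩
    · calc (s ∪ s.image (fun x => 1 - x)).card ≤ s.card + (s.image (fun x => 1 - x)).card :=
            Finset.card_union_le _ _
        _ ≤ M + M := add_le_add hcard ((Finset.card_image_le).trans hcard)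
        _ = 2 * M := (two_mul M).symm
    · filter_upwards [hmem, hU01] with ω h1 h2
      rcases h2 with h | h
      · have : U ω * X i ω + (1 - U ω) * (1 - X i ω) = 1 - X i ω := by rw [h]; ring
        rw [this]
        exact Finset.mem_union_right _ (Finset.mem_image_of_mem _ h1)
      · have : U ω * X i ω + (1 - U ω) * (1 - X i ω) = X i ω := by rw [h]; ring
        rw [this]
        exact Finset.mem_union_left _ h1
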